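/- arXiv:2009.14763 — 8 statements merged into one kernel-verified Lean document; each statement's English description precedes it below -/
import Mathlib

section
/- Let A be a finite set with |A| = n − 1, let H' ⊆ A with |A ∖ H'| ≤ f, and let d : A → ℝ. Let F ⊆ A with |F| = n − f − 1 be such that d(j) ≤ d(k) for all j ∈ F and k ∈ A ∖ F (F consists of the n − f − 1 smallest values of d). Then there exists an injection σ : (F ∖ H') → (H' ∖ F) such that d(k) ≤ d(σ(k)) for every k ∈ F ∖ H'. -/
open Finset

/-- pigeonhole property of the Comparative Elimination filter.
For each surviving element of `F` outside `H'` there is a distinct eliminated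
element of `H'` with at least as large a value of `d`. -/
theorem ce_filter_injection {ι : Type*} [DecidableEq ι] (n f : ℕ)
    (A H' F : Finset ι) (hA : A.card = n - 1)
    (hH'A : H' ⊆ A) (hfaulty : (A \ H').card ≤ f)
    (d : ι → ℝ) (hFA : F ⊆ A) (hFcard : F.card = n - f - 1)
    (hfilter : ∀ j ∈ F, ∀ k ∈ A \ F, d j ≤ d k) :
    ∃ σ : ι → ι, Set.InjOn σ ↑(F \ H') ∧
      ∀ k ∈ F \ H', σ k ∈ H' \ F ∧ d k ≤ d (σ k) := by
  have hH'card : n - 1 - f ≤ H'.card := by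
    have := card_sdiff_of_subset hH'A
    omega
  have hF : F.card ≤ H'.card := by omega
  have hcard : (F \ H').card ≤ (H' \ F).card := by
    have h1 := card_sdiff_add_card_inter F H'
    have h2 := card_sdiff_add_card_inter H' F
    rw [inter_comm] at h2
    omega
  obtain ⟨T, hTsub, hTcard⟩ := exists_subset_card_eq hcard
  have e : (F \ H' : Finset ι) ≃ (T : Finset ι) :=
    Fintype.equivOfCardEq (by simp [hTcard])
  refine ⟨fun x => if h : x ∈ F \ H' then (e ⟨x, h⟩ : ι) else x, ?_, ?_⟩
  · intro x hx y hy hxy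
    simp only [Finset.coe_sdiff, Set.mem_diff, Finset.mem_coe] at hx hy
    have hx' : x ∈ F \ H' := by simp [Finset.mem_sdiff, hx.1, hx.2]
    have hy' : y ∈ F \ H' := by simp [Finset.mem_sdiff, hy.1, hy.2]
    simp only [dif_pos hx', dif_pos hy'] at hxy
    have := e.injective (Subtype.ext hxy)
    exact congrArg Subtype.val this
  · intro k hk
    simp only [dif_pos hk]
    have hmem : ((e ⟨k, hk⟩ : ι)) ∈ T := (e ⟨k, hk⟩).2
    have hHF : (e ⟨k, hk⟩ : ι) ∈ H' \ F := hTsub hmem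
    refine ⟨hHF, ?_⟩
    have hkF : k ∈ F := (mem_sdiff.mp hk).1
    have : (e ⟨k, hk⟩ : ι) ∈ A \ F := by
      rw [mem_sdiff] at hHF ⊢
      exact ⟨hH'A hHF.1, hHF.2⟩
    exact hfilter k hkF _ this
end

section
/- Let A be a finite set with |A| = n − 1, let H' ⊆ A with |A ∖ H'| ≤ f, let x ∈ ℝ^d, let m : A → ℝ^d, and let F ⊆ A with |F| = n − f − 1 be such that ‖x − m(j)‖ ≤ ‖x − m(k)‖ for all j ∈ F and k ∈ A ∖ F. Define e = Σ_{j ∈ F∖H'} (x − m(j)) − Σ_{j ∈ H'∖F} (x − m(j)). Then ‖e‖ ≤ 2 Σ_{j ∈ H'∖F} ‖x − m(j)‖. -/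
open Finset

/-- bound on the perturbation term `e` of the Comparative
Elimination filter: `‖e‖ ≤ 2 Σ_{j ∈ H'∖F} ‖x − m(j)‖`. -/
theorem ce_filter_error_bound {d n f : ℕ} {ι : Type*} [DecidableEq ι]
    (A H' F : Finset ι) (hA : A.card = n - 1)
    (hH'A : H' ⊆ A) (hfaulty : (A \ H').card ≤ f)
    (x : EuclideanSpace ℝ (Fin d)) (m : ι → EuclideanSpace ℝ (Fin d))
    (hFA : F ⊆ A) (hFcard : F.card = n - f - 1)
    (hfilter : ∀ j ∈ F, ∀ k ∈ A \ F, ‖x - m j‖ ≤ ‖x - m k‖) :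
    ‖(∑ j ∈ F \ H', (x - m j)) - ∑ j ∈ H' \ F, (x - m j)‖
      ≤ 2 * ∑ j ∈ H' \ F, ‖x - m j‖ := by
  -- cardinality facts
  have hHcard : n - f - 1 ≤ H'.card := by
    have h1 : (A \ H').card + H'.card = A.card := Finset.card_sdiff_add_card_eq_card hH'A
    omega
  have hcard : (F \ H').card ≤ (H' \ F).card := by
    have h1 : (F \ H').card + (F ∩ H').card = F.card := Finset.card_sdiff_add_card_inter F H'
    have h2 : (H' \ F).card + (H' ∩ F).card = H'.card := Finset.card_sdiff_add_card_inter H' F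
    have h3 : (F ∩ H').card = (H' ∩ F).card := by rw [Finset.inter_comm]
    omega
  -- key: sum over F \ H' is bounded by sum over H' \ F
  have key : ∑ j ∈ F \ H', ‖x - m j‖ ≤ ∑ j ∈ H' \ F, ‖x - m j‖ := by
    rcases (H' \ F).eq_empty_or_nonempty with he | hne
    · have : (F \ H') = ∅ := by
        rw [he] at hcard
        simpa using Finset.card_eq_zero.mp (Nat.le_zero.mp hcard)
      simp [this, he]
    · obtain ⟨k0, hk0, hk0min⟩ := Finset.exists_min_image (H' \ F) (fun k => ‖x - m k‖) hne
      have hk0AF : k0 ∈ A \ F := by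
        rw [Finset.mem_sdiff] at hk0 ⊢
        exact ⟨hH'A hk0.1, hk0.2⟩
      have h1 : ∑ j ∈ F \ H', ‖x - m j‖ ≤ (F \ H').card • ‖x - m k0‖ :=
        Finset.sum_le_card_nsmul _ _ _ (fun j hj =>
          hfilter j (Finset.mem_sdiff.mp hj).1 k0 hk0AF)
      have h2 : (H' \ F).card • ‖x - m k0‖ ≤ ∑ j ∈ H' \ F, ‖x - m j‖ :=
        Finset.card_nsmul_le_sum _ _ _ (fun j hj => hk0min j hj)
      have h3 : (F \ H').card • ‖x - m k0‖ ≤ (H' \ F).card • ‖x - m k0‖ :=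
        nsmul_le_nsmul_left (norm_nonneg _) hcard
      linarith [h1, h2, h3]
  calc ‖(∑ j ∈ F \ H', (x - m j)) - ∑ j ∈ H' \ F, (x - m j)‖
      ≤ ‖∑ j ∈ F \ H', (x - m j)‖ + ‖∑ j ∈ H' \ F, (x - m j)‖ := norm_sub_le _ _
    _ ≤ (∑ j ∈ F \ H', ‖x - m j‖) + ∑ j ∈ H' \ F, ‖x - m j‖ :=
        add_le_add (norm_sum_le _ _) (norm_sum_le _ _)
    _ ≤ (∑ j ∈ H' \ F, ‖x - m j‖) + ∑ j ∈ H' \ F, ‖x - m j‖ := by linarith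
    _ = 2 * ∑ j ∈ H' \ F, ‖x - m j‖ := by ring
end

section
/- Let x, x* ∈ ℝ^d, let J be a finite index set with points (x_j)_{j∈J} in ℝ^d, let E ⊆ J, and let e ∈ ℝ^d satisfy ‖e‖ ≤ 2 Σ_{j∈E} ‖x − x_j‖. Then (1/2) Σ_{j∈J} ‖x − x_j‖² + ⟨x − x*, e⟩ ≥ (1/2) Σ_{j∈J∖E} ‖x − x_j‖² − 2|E| · ‖x − x*‖². -/
open Finset
open scoped RealInnerProductSpace

/-- lower bound on `(1/2) Σ_{j∈J} ‖x − x_j‖² + ⟨x − x*, e⟩` when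
`‖e‖ ≤ 2 Σ_{j∈E} ‖x − x_j‖`. -/
theorem S_lower_bound {d : ℕ} {ι : Type*} [DecidableEq ι]
    (J E : Finset ι) (hEJ : E ⊆ J)
    (x xs : EuclideanSpace ℝ (Fin d)) (xj : ι → EuclideanSpace ℝ (Fin d))
    (e : EuclideanSpace ℝ (Fin d))
    (he : ‖e‖ ≤ 2 * ∑ j ∈ E, ‖x - xj j‖) :
    (1 / 2) * ∑ j ∈ J, ‖x - xj j‖ ^ 2 + ⟪x - xs, e⟫
      ≥ (1 / 2) * ∑ j ∈ J \ E, ‖x - xj j‖ ^ 2 - 2 * (E.card : ℝ) * ‖x - xs‖ ^ 2 := by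
  have hsplit : ∑ j ∈ J, ‖x - xj j‖ ^ 2
      = ∑ j ∈ J \ E, ‖x - xj j‖ ^ 2 + ∑ j ∈ E, ‖x - xj j‖ ^ 2 :=
    (Finset.sum_sdiff hEJ).symm
  have h1 : ⟪x - xs, e⟫ ≥ -(‖x - xs‖ * ‖e‖) := by
    have := abs_real_inner_le_norm (x - xs) e
    have := neg_abs_le ⟪x - xs, e⟫
    linarith [abs_real_inner_le_norm (x - xs) e]
  have h2 : ‖x - xs‖ * ‖e‖ ≤ ∑ j ∈ E, (2 * ‖x - xs‖ * ‖x - xj j‖) := by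
    calc ‖x - xs‖ * ‖e‖ ≤ ‖x - xs‖ * (2 * ∑ j ∈ E, ‖x - xj j‖) :=
          mul_le_mul_of_nonneg_left he (norm_nonneg _)
      _ = ∑ j ∈ E, (2 * ‖x - xs‖ * ‖x - xj j‖) := by
          rw [Finset.mul_sum, Finset.mul_sum]; exact Finset.sum_congr rfl fun j _ => by ring
  have h3 : ∀ j ∈ E, 2 * ‖x - xs‖ * ‖x - xj j‖
      ≤ 2 * ‖x - xs‖ ^ 2 + (1 / 2) * ‖x - xj j‖ ^ 2 := by
    intro j _
    nlinarith [sq_nonneg (2 * ‖x - xs‖ - ‖x - xj j‖)]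
  have h4 : ∑ j ∈ E, (2 * ‖x - xs‖ * ‖x - xj j‖)
      ≤ (E.card : ℝ) * (2 * ‖x - xs‖ ^ 2) + (1 / 2) * ∑ j ∈ E, ‖x - xj j‖ ^ 2 := by
    calc ∑ j ∈ E, (2 * ‖x - xs‖ * ‖x - xj j‖)
        ≤ ∑ j ∈ E, (2 * ‖x - xs‖ ^ 2 + (1 / 2) * ‖x - xj j‖ ^ 2) :=
          Finset.sum_le_sum h3
      _ = (E.card : ℝ) * (2 * ‖x - xs‖ ^ 2) + (1 / 2) * ∑ j ∈ E, ‖x - xj j‖ ^ 2 := by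
          rw [Finset.sum_add_distrib, Finset.sum_const, Finset.mul_sum]
          simp [mul_comm]
  linarith
end

section
/- Let H be a finite set of differentiable functions indexed by a finite set H with Q_j : ℝ^d → ℝ, let x* ∈ ℝ^d satisfy ∇Q_j(x*) = 0 for all j ∈ H, and let n > f ≥ 0 be integers with |H| ≥ n − f. Assume: (i) Σ_{j∈H} ⟨x − x*, ∇Q_j(x)⟩ ≥ λ|H| ‖x − x*‖² for all x ∈ ℝ^d; (ii) each ∇Q_j is μ-Lipschitz, so in particular ‖∇Q_j(x)‖ ≤ μ‖x − x*‖ for all x; (iii) λ(n − f) ≥ μf with λ, μ > 0. Then for every S ⊆ H with |H ∖ S| ≤ f and |S| ≤ n − f, and every x ∈ ℝ^d: Σ_{j∈S} ‖∇Q_j(x)‖² ≥ ((λ(n−f) − μf)² / (n − f)) · ‖x − x*‖². -/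
open Finset
open scoped RealInnerProductSpace

/-- lower bound on the aggregate squared gradient norms over any
subset `S ⊆ H` with `|H∖S| ≤ f` and `|S| ≤ n − f`. -/
theorem sum_sq_grad_lower_bound {d n f : ℕ} {ι : Type*} [DecidableEq ι]
    (hnf : f < n) (H : Finset ι) (hH : n - f ≤ H.card)
    (Q : ι → EuclideanSpace ℝ (Fin d) → ℝ)
    (hdiff : ∀ j ∈ H, Differentiable ℝ (Q j))
    (xs : EuclideanSpace ℝ (Fin d))
    (hgrad0 : ∀ j ∈ H, gradient (Q j) xs = 0)
    (lam mu : ℝ) (hlam : 0 < lam) (hmu : 0 < mu)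
    (hsc : ∀ x : EuclideanSpace ℝ (Fin d),
      ∑ j ∈ H, ⟪x - xs, gradient (Q j) x⟫ ≥ lam * (H.card : ℝ) * ‖x - xs‖ ^ 2)
    (hlip : ∀ j ∈ H, ∀ x y : EuclideanSpace ℝ (Fin d),
      ‖gradient (Q j) x - gradient (Q j) y‖ ≤ mu * ‖x - y‖)
    (hmargin : lam * ((n : ℝ) - (f : ℝ)) ≥ mu * (f : ℝ)) :
    ∀ S ⊆ H, (H \ S).card ≤ f → S.card ≤ n - f →
      ∀ x : EuclideanSpace ℝ (Fin d),
        ∑ j ∈ S, ‖gradient (Q j) x‖ ^ 2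
          ≥ (lam * ((n : ℝ) - (f : ℝ)) - mu * (f : ℝ)) ^ 2 / ((n : ℝ) - (f : ℝ))
              * ‖x - xs‖ ^ 2 := by
  intro S hS hHS hScard x
  set g : ι → EuclideanSpace ℝ (Fin d) := fun j => gradient (Q j) x with hg
  set t := ‖x - xs‖ with ht
  have ht0 : 0 ≤ t := norm_nonneg _
  have hnf' : (0:ℝ) < (n:ℝ) - f := by
    have : (f:ℝ) < n := Nat.cast_lt.mpr hnf
    linarith
  set c := lam * ((n:ℝ) - f) - mu * f with hc
  have hc0 : 0 ≤ c := sub_nonneg.mpr hmargin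
  have hnorm : ∀ j ∈ H, ‖g j‖ ≤ mu * t := by
    intro j hj
    have h := hlip j hj x xs
    simpa [hg, hgrad0 j hj, ht] using h
  -- lower bound on inner sum over S
  have hA : c * t ^ 2 ≤ ∑ j ∈ S, ⟪x - xs, g j⟫ := by
    have hsplit : ∑ j ∈ S, ⟪x - xs, g j⟫
        = ∑ j ∈ H, ⟪x - xs, g j⟫ - ∑ j ∈ H \ S, ⟪x - xs, g j⟫ := by
      rw [← Finset.sum_sdiff hS]; ring
    have hcard : (n:ℝ) - f ≤ H.card := by
      have h1 : ((n - f : ℕ) : ℝ) ≤ H.card := Nat.cast_le.mpr hH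
      rwa [Nat.cast_sub hnf.le] at h1
    have hHsum : lam * ((n:ℝ) - f) * t ^ 2 ≤ ∑ j ∈ H, ⟪x - xs, g j⟫ := by
      have h1 : lam * (H.card : ℝ) * t ^ 2 ≤ ∑ j ∈ H, ⟪x - xs, g j⟫ := hsc x
      have h2 : lam * ((n:ℝ) - f) * t ^ 2 ≤ lam * (H.card : ℝ) * t ^ 2 :=
        mul_le_mul_of_nonneg_right
          (mul_le_mul_of_nonneg_left hcard hlam.le) (sq_nonneg t)
      linarith
    have hDsum : ∑ j ∈ H \ S, ⟪x - xs, g j⟫ ≤ mu * f * t ^ 2 := by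
      calc ∑ j ∈ H \ S, ⟪x - xs, g j⟫ ≤ ∑ _j ∈ H \ S, mu * t * t := by
            apply Finset.sum_le_sum
            intro j hj
            have hjH : j ∈ H := (Finset.mem_sdiff.mp hj).1
            calc ⟪x - xs, g j⟫ ≤ ‖x - xs‖ * ‖g j‖ := real_inner_le_norm _ _
              _ ≤ t * (mu * t) := mul_le_mul_of_nonneg_left (hnorm j hjH) ht0
              _ = mu * t * t := by ring
        _ = ((H \ S).card : ℝ) * (mu * t * t) := by
              rw [Finset.sum_const, nsmul_eq_mul]
        _ ≤ (f : ℝ) * (mu * t * t) := by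
              apply mul_le_mul_of_nonneg_right _ (by positivity)
              exact_mod_cast hHS
        _ = mu * f * t ^ 2 := by ring
    rw [hsplit, hc]; linarith
  -- Cauchy-Schwarz pieces
  set B := ∑ j ∈ S, ‖g j‖ ^ 2 with hB
  set L := ∑ j ∈ S, ‖g j‖ with hL
  have hB0 : 0 ≤ B := Finset.sum_nonneg fun j _ => sq_nonneg _
  have hAt : ∑ j ∈ S, ⟪x - xs, g j⟫ ≤ t * L := by
    rw [hL, Finset.mul_sum]
    apply Finset.sum_le_sum
    intro j hj
    exact real_inner_le_norm _ _
  have hL2 : L ^ 2 ≤ (S.card : ℝ) * B := by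
    have := sq_sum_le_card_mul_sum_sq (s := S) (f := fun j => ‖g j‖)
    exact_mod_cast this
  have hs : (S.card : ℝ) ≤ (n:ℝ) - f := by
    have h1 : ((S.card : ℕ) : ℝ) ≤ ((n - f : ℕ) : ℝ) := Nat.cast_le.mpr hScard
    rwa [Nat.cast_sub hnf.le] at h1
  -- combine
  rw [ge_iff_le, div_mul_eq_mul_div, div_le_iff₀ hnf']
  rcases eq_or_lt_of_le ht0 with h | h
  · have h0 : t = 0 := h.symm
    rw [h0]
    have : (0:ℝ) ≤ B * ((n:ℝ) - f) := mul_nonneg hB0 hnf'.le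
    nlinarith
  · have hAL : c * t ^ 2 ≤ t * L := le_trans hA hAt
    have hct : 0 ≤ c * t ^ 2 := mul_nonneg hc0 (sq_nonneg t)
    have h1 : (c * t ^ 2) ^ 2 ≤ (t * L) ^ 2 := by
      have := mul_self_le_mul_self hct hAL
      simpa [sq] using this
    have h2 : (t * L) ^ 2 ≤ t ^ 2 * ((S.card : ℝ) * B) := by
      rw [mul_pow]; exact mul_le_mul_of_nonneg_left hL2 (sq_nonneg t)
    have h3 : t ^ 2 * ((S.card : ℝ) * B) ≤ t ^ 2 * (((n:ℝ) - f) * B) :=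
      mul_le_mul_of_nonneg_left (mul_le_mul_of_nonneg_right hs hB0) (sq_nonneg t)
    have key : (c ^ 2 * t ^ 2) * t ^ 2 ≤ (B * ((n:ℝ) - f)) * t ^ 2 := by
      have := le_trans h1 (le_trans h2 h3)
      linear_combination this
    exact le_of_mul_le_mul_right key (pow_pos h 2)
end

section
/- Let n > f ≥ 0 be integers, V a set of n agents, H ⊆ V with |H| ≥ n − f, and for each i ∈ H let Q_i : ℝ^d → ℝ be convex and differentiable with μ-Lipschitz gradient. Assume the average Q_H(x) = (1/|H|)Σ_{i∈H}Q_i(x) is λ-strongly convex with 0 < λ ≤ μ, that x* ∈ ℝ^d satisfies ∇Q_i(x*) = 0 for all i ∈ H, and that λ(n − f) − μf > 0. Suppose for each i ∈ H we are given x_i ∈ argmin_x Q_i(x), vectors m(i,j) ∈ ℝ^d for j ∈ V∖{i} with m(i,j) = x_j for j ∈ H∖{i}, and a set F_i ⊆ V∖{i} with |F_i| = n − f − 1 such that ‖x_i − m(i,j)‖ ≤ ‖x_i − m(i,k)‖ for all j ∈ F_i and k ∈ (V∖{i})∖F_i. Define φ_i = ⟨x_i − x*, Σ_{j∈F_i}(x_i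 − m(i,j))⟩ and β = (λ(n−f) − μf)² / (2μ²(n−f)) − 2f. Then Σ_{i∈H} φ_i ≥ β · Σ_{i∈H} ‖x_i − x*‖². -/
open Finset
open scoped RealInnerProductSpace

private lemma gradient_eq_zero_of_isLocalMin' {E : Type*} [NormedAddCommGroup E]
    [InnerProductSpace ℝ E] [CompleteSpace E] {g : E → ℝ} {a : E}
    (h : IsLocalMin g a) : gradient g a = 0 := by
  unfold gradient
  rw [h.fderiv_eq_zero, map_zero]

private lemma gradient_const_mul_sum' {E : Type*} [NormedAddCommGroup E]
    [InnerProductSpace ℝ E] [CompleteSpace E] {ι : Type*} (s : Finset ι)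
    (Q : ι → E → ℝ) (hd : ∀ i ∈ s, Differentiable ℝ (Q i)) (c : ℝ) (y : E) :
    gradient (fun z => c * ∑ i ∈ s, Q i z) y = c • ∑ i ∈ s, gradient (Q i) y := by
  have h1 : HasFDerivAt (fun z => ∑ i ∈ s, Q i z) (∑ i ∈ s, fderiv ℝ (Q i) y) y :=
    HasFDerivAt.fun_sum (fun i hi => ((hd i hi) y).hasFDerivAt)
  have h2 : HasFDerivAt (fun z => c * ∑ i ∈ s, Q i z)
      (c • ∑ i ∈ s, fderiv ℝ (Q i) y) y := h1.const_mul c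
  have h3 := h2.fderiv
  unfold gradient
  rw [h3, map_smul, map_sum]

set_option maxHeartbeats 2000000 in
/-- Part I of the proof of Theorem 1: the aggregate inner-product
term `Σ_{i∈H} φ_i` is bounded below by `β · Σ_{i∈H} ‖x_i − x*‖²`, where
`β = (λ(n−f) − μf)² / (2μ²(n−f)) − 2f`. -/
theorem sum_phi_lower_bound {d n f : ℕ} {ι : Type*} [DecidableEq ι]
    (hnf : f < n) (V H : Finset ι) (hV : V.card = n) (hHV : H ⊆ V)
    (hH : n - f ≤ H.card)
    (Q : ι → EuclideanSpace ℝ (Fin d) → ℝ)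
    (hconv : ∀ i ∈ H, ConvexOn ℝ Set.univ (Q i))
    (hdiff : ∀ i ∈ H, Differentiable ℝ (Q i))
    (lam mu : ℝ) (hlam : 0 < lam) (hlammu : lam ≤ mu)
    (hlip : ∀ i ∈ H, ∀ x y : EuclideanSpace ℝ (Fin d),
      ‖gradient (Q i) x - gradient (Q i) y‖ ≤ mu * ‖x - y‖)
    (hsc : ∀ x y : EuclideanSpace ℝ (Fin d),
      ⟪x - y, gradient (fun z => (H.card : ℝ)⁻¹ * ∑ i ∈ H, Q i z) x
        - gradient (fun z => (H.card : ℝ)⁻¹ * ∑ i ∈ H, Q i z) y⟫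
          ≥ lam * ‖x - y‖ ^ 2)
    (xs : EuclideanSpace ℝ (Fin d))
    (hgrad0 : ∀ i ∈ H, gradient (Q i) xs = 0)
    (hmargin : lam * ((n : ℝ) - (f : ℝ)) - mu * (f : ℝ) > 0)
    (x : ι → EuclideanSpace ℝ (Fin d))
    (hxmin : ∀ i ∈ H, ∀ y, Q i (x i) ≤ Q i y)
    (m : ι → ι → EuclideanSpace ℝ (Fin d))
    (hm : ∀ i ∈ H, ∀ j ∈ H.erase i, m i j = x j)
    (F : ι → Finset ι)
    (hFsub : ∀ i ∈ H, F i ⊆ V.erase i)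
    (hFcard : ∀ i ∈ H, (F i).card = n - f - 1)
    (hfilter : ∀ i ∈ H, ∀ j ∈ F i, ∀ k ∈ V.erase i \ F i,
      ‖x i - m i j‖ ≤ ‖x i - m i k‖) :
    ∑ i ∈ H, ⟪x i - xs, ∑ j ∈ F i, (x i - m i j)⟫
      ≥ ((lam * ((n : ℝ) - (f : ℝ)) - mu * (f : ℝ)) ^ 2
            / (2 * mu ^ 2 * ((n : ℝ) - (f : ℝ))) - 2 * (f : ℝ))
          * ∑ i ∈ H, ‖x i - xs‖ ^ 2 := by
  classical
  have hmu : (0:ℝ) < mu := lt_of_lt_of_le hlam hlammu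
  have hfn : (f:ℝ) < (n:ℝ) := by exact_mod_cast hnf
  set N : ℝ := (n : ℝ) - (f : ℝ) with hNdef
  have hNpos : 0 < N := sub_pos.mpr hfn
  set M : ℝ := lam * N - mu * (f:ℝ) with hMdef
  have hMpos : 0 < M := hmargin
  set Vs : ℝ := ∑ i ∈ H, ‖x i - xs‖ ^ 2 with hVdef
  have hVs0 : 0 ≤ Vs := Finset.sum_nonneg fun i _ => sq_nonneg _
  have hHn : H.card ≤ n := hV ▸ Finset.card_le_card hHV
  have hhn : (H.card:ℝ) ≤ (n:ℝ) := by exact_mod_cast hHn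
  have hNh : N ≤ (H.card:ℝ) := by
    have h1 : ((n - f : ℕ) : ℝ) ≤ (H.card:ℝ) := by exact_mod_cast hH
    have h2 : (n - f : ℕ) + f = n := Nat.sub_add_cancel hnf.le
    have h3 : ((n - f : ℕ) : ℝ) + (f:ℝ) = (n:ℝ) := by exact_mod_cast h2
    linarith
  have hhpos : (0:ℝ) < (H.card:ℝ) := lt_of_lt_of_le hNpos hNh
  -- gradient facts
  have hgradmin : ∀ i ∈ H, gradient (Q i) (x i) = 0 := fun i hi =>
    gradient_eq_zero_of_isLocalMin' (Filter.Eventually.of_forall fun y => hxmin i hi y)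
  have havg : ∀ y, gradient (fun z => (H.card:ℝ)⁻¹ * ∑ j ∈ H, Q j z) y
      = (H.card:ℝ)⁻¹ • ∑ j ∈ H, gradient (Q j) y :=
    fun y => gradient_const_mul_sum' H Q hdiff _ y
  have havgxs : gradient (fun z => (H.card:ℝ)⁻¹ * ∑ j ∈ H, Q j z) xs = 0 := by
    rw [havg, Finset.sum_congr rfl hgrad0, Finset.sum_const_zero, smul_zero]
  set P : ℝ := mu^2 * N with hPdef
  have hPpos : 0 < P := by positivity
  have key : ∀ i ∈ H, (M^2/(2*P) - 2*(f:ℝ) + (H.card:ℝ)/2) * ‖x i - xs‖^2 - Vs/2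
      ≤ ⟪x i - xs, ∑ j ∈ F i, (x i - m i j)⟫ := by
    intro i hi
    have hHpos : 0 < H.card := Finset.card_pos.mpr ⟨i, hi⟩
    -- combinatorics
    have hAsub : F i ∩ H ⊆ H.erase i := by
      intro j hj
      rw [Finset.mem_inter] at hj
      exact Finset.mem_erase.mpr ⟨(Finset.mem_erase.mp (hFsub i hi hj.1)).1, hj.2⟩
    have hAeq : H.erase i ∩ F i = F i ∩ H := by
      ext j
      simp only [Finset.mem_inter, Finset.mem_erase]
      constructor
      · rintro ⟨⟨_, hjH⟩, hjF⟩; exact ⟨hjF, hjH⟩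
      · rintro ⟨hjF, hjH⟩
        exact ⟨⟨(Finset.mem_erase.mp (hFsub i hi hjF)).1, hjH⟩, hjF⟩
    have hcAB : (F i ∩ H).card + (F i \ H).card = n - f - 1 := by
      rw [Finset.card_inter_add_card_sdiff, hFcard i hi]
    have hcAO : (F i ∩ H).card + (H.erase i \ F i).card = H.card - 1 := by
      rw [← hAeq, Finset.card_inter_add_card_sdiff, Finset.card_erase_of_mem hi]
    have hBVH : F i \ H ⊆ V \ H := by
      intro j hj
      rw [Finset.mem_sdiff] at hj
      exact Finset.mem_sdiff.mpr ⟨Finset.mem_of_mem_erase (hFsub i hi hj.1), hj.2⟩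
    have hcB : (F i \ H).card + H.card ≤ n := by
      have h1 := Finset.card_le_card hBVH
      rw [Finset.card_sdiff_of_subset hHV, hV] at h1
      omega
    have hBO : (F i \ H).card ≤ (H.erase i \ F i).card := by omega
    obtain ⟨K, hKO, hKcard⟩ := Finset.exists_subset_card_eq hBO
    -- real casts
    have hRab : ((F i ∩ H).card : ℝ) + ((F i \ H).card : ℝ) = N - 1 := by
      have h1 : (F i ∩ H).card + (F i \ H).card + f + 1 = n := by omega
      have h2 : ((F i ∩ H).card : ℝ) + ((F i \ H).card : ℝ) + (f:ℝ) + 1 = (n:ℝ) := by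
        exact_mod_cast h1
      rw [hNdef]; linarith
    have hRao : ((F i ∩ H).card : ℝ) + ((H.erase i \ F i).card : ℝ) = (H.card:ℝ) - 1 := by
      have h1 : (F i ∩ H).card + (H.erase i \ F i).card + 1 = H.card := by omega
      have h2 : ((F i ∩ H).card : ℝ) + ((H.erase i \ F i).card : ℝ) + 1 = (H.card:ℝ) := by
        exact_mod_cast h1
      linarith
    have hRb : ((F i \ H).card : ℝ) ≤ (n:ℝ) - (H.card:ℝ) := by
      have h2 : ((F i \ H).card : ℝ) + (H.card:ℝ) ≤ (n:ℝ) := by exact_mod_cast hcB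
      linarith
    have hco_f : ((H.erase i \ F i).card : ℝ) ≤ (f:ℝ) := by
      have : (n:ℝ) - N = (f:ℝ) := by rw [hNdef]; ring
      linarith
    -- strong convexity
    have hsc1 : lam * ‖x i - xs‖ ^ 2
        ≤ (H.card : ℝ)⁻¹ * ∑ j ∈ H, ⟪x i - xs, gradient (Q j) (x i)⟫ := by
      have h1 := hsc (x i) xs
      rw [havg, havgxs, sub_zero] at h1
      calc lam * ‖x i - xs‖ ^ 2
          ≤ ⟪x i - xs, (H.card:ℝ)⁻¹ • ∑ j ∈ H, gradient (Q j) (x i)⟫ := h1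
        _ = (H.card:ℝ)⁻¹ * ∑ j ∈ H, ⟪x i - xs, gradient (Q j) (x i)⟫ := by
            rw [real_inner_smul_right, inner_sum]
    have hTA0 : (0:ℝ) ≤ ∑ j ∈ F i ∩ H, ‖x i - x j‖^2 :=
      Finset.sum_nonneg fun j _ => sq_nonneg _
    have hSA0 : (0:ℝ) ≤ ∑ j ∈ F i ∩ H, ‖x i - x j‖ :=
      Finset.sum_nonneg fun j _ => norm_nonneg _
    have hsum_split : ∑ j ∈ H, ⟪x i - xs, gradient (Q j) (x i)⟫
        ≤ mu * ‖x i - xs‖ * ∑ j ∈ F i ∩ H, ‖x i - x j‖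
          + ((H.erase i \ F i).card : ℝ) * (mu * ‖x i - xs‖^2) := by
      have hi0 : ⟪x i - xs, gradient (Q i) (x i)⟫ = (0:ℝ) := by
        rw [hgradmin i hi, inner_zero_right]
      have hsplit : ∑ j ∈ H, ⟪x i - xs, gradient (Q j) (x i)⟫
          = ∑ j ∈ F i ∩ H, ⟪x i - xs, gradient (Q j) (x i)⟫
            + ∑ j ∈ H.erase i \ F i, ⟪x i - xs, gradient (Q j) (x i)⟫ := by
        rw [← Finset.add_sum_erase H _ hi, hi0, zero_add,
          ← Finset.sum_inter_add_sum_sdiff (H.erase i) (F i)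
            (fun j => ⟪x i - xs, gradient (Q j) (x i)⟫), hAeq]
      rw [hsplit]
      have hA : ∑ j ∈ F i ∩ H, ⟪x i - xs, gradient (Q j) (x i)⟫
          ≤ ∑ j ∈ F i ∩ H, mu * ‖x i - xs‖ * ‖x i - x j‖ := by
        refine Finset.sum_le_sum fun j hj => ?_
        have hjH : j ∈ H := (Finset.mem_inter.mp hj).2
        have hg : ‖gradient (Q j) (x i)‖ ≤ mu * ‖x i - x j‖ := by
          have h1 := hlip j hjH (x i) (x j)
          rwa [hgradmin j hjH, sub_zero] at h1
        calc ⟪x i - xs, gradient (Q j) (x i)⟫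
            ≤ ‖x i - xs‖ * ‖gradient (Q j) (x i)‖ := real_inner_le_norm _ _
          _ ≤ ‖x i - xs‖ * (mu * ‖x i - x j‖) :=
              mul_le_mul_of_nonneg_left hg (norm_nonneg _)
          _ = mu * ‖x i - xs‖ * ‖x i - x j‖ := by ring
      have hO : ∑ j ∈ H.erase i \ F i, ⟪x i - xs, gradient (Q j) (x i)⟫
          ≤ ∑ _j ∈ H.erase i \ F i, mu * ‖x i - xs‖^2 := by
        refine Finset.sum_le_sum fun j hj => ?_
        have hjH : j ∈ H :=
          Finset.mem_of_mem_erase (Finset.mem_sdiff.mp hj).1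
        have hg : ‖gradient (Q j) (x i)‖ ≤ mu * ‖x i - xs‖ := by
          have h1 := hlip j hjH (x i) xs
          rwa [hgrad0 j hjH, sub_zero] at h1
        calc ⟪x i - xs, gradient (Q j) (x i)⟫
            ≤ ‖x i - xs‖ * ‖gradient (Q j) (x i)‖ := real_inner_le_norm _ _
          _ ≤ ‖x i - xs‖ * (mu * ‖x i - xs‖) :=
              mul_le_mul_of_nonneg_left hg (norm_nonneg _)
          _ = mu * ‖x i - xs‖^2 := by ring
      calc ∑ j ∈ F i ∩ H, ⟪x i - xs, gradient (Q j) (x i)⟫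
            + ∑ j ∈ H.erase i \ F i, ⟪x i - xs, gradient (Q j) (x i)⟫
          ≤ ∑ j ∈ F i ∩ H, mu * ‖x i - xs‖ * ‖x i - x j‖
            + ∑ _j ∈ H.erase i \ F i, mu * ‖x i - xs‖^2 := add_le_add hA hO
        _ = mu * ‖x i - xs‖ * ∑ j ∈ F i ∩ H, ‖x i - x j‖
            + ((H.erase i \ F i).card : ℝ) * (mu * ‖x i - xs‖^2) := by
            rw [← Finset.mul_sum, Finset.sum_const, nsmul_eq_mul]
    have hmain : (lam * (H.card:ℝ)) * ‖x i - xs‖^2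
        ≤ mu * ‖x i - xs‖ * ∑ j ∈ F i ∩ H, ‖x i - x j‖
          + ((H.erase i \ F i).card : ℝ) * (mu * ‖x i - xs‖^2) := by
      have h2 : lam * ‖x i - xs‖^2
          ≤ (H.card:ℝ)⁻¹ * (mu * ‖x i - xs‖ * ∑ j ∈ F i ∩ H, ‖x i - x j‖
            + ((H.erase i \ F i).card : ℝ) * (mu * ‖x i - xs‖^2)) :=
        hsc1.trans (mul_le_mul_of_nonneg_left hsum_split (by positivity))
      calc (lam * (H.card:ℝ)) * ‖x i - xs‖^2 = (H.card:ℝ) * (lam * ‖x i - xs‖^2) := by ring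
        _ ≤ (H.card:ℝ) * ((H.card:ℝ)⁻¹ * (mu * ‖x i - xs‖ * ∑ j ∈ F i ∩ H, ‖x i - x j‖
            + ((H.erase i \ F i).card : ℝ) * (mu * ‖x i - xs‖^2))) :=
            mul_le_mul_of_nonneg_left h2 hhpos.le
        _ = mu * ‖x i - xs‖ * ∑ j ∈ F i ∩ H, ‖x i - x j‖
            + ((H.erase i \ F i).card : ℝ) * (mu * ‖x i - xs‖^2) := by
            rw [← mul_assoc, mul_inv_cancel₀ (ne_of_gt hhpos), one_mul]
    have hDge : M ≤ lam * (H.card:ℝ) - mu * ((H.erase i \ F i).card : ℝ) := by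
      have h1 : 0 ≤ lam * ((H.card:ℝ) - N) := mul_nonneg hlam.le (by linarith)
      have h2 : 0 ≤ mu * ((f:ℝ) - ((H.erase i \ F i).card : ℝ)) :=
        mul_nonneg hmu.le (by linarith)
      rw [hMdef]; linarith
    have hkey2 : M^2 * ‖x i - xs‖^2 ≤ P * ∑ j ∈ F i ∩ H, ‖x i - x j‖^2 := by
      rcases eq_or_lt_of_le (norm_nonneg (x i - xs)) with hri | hri
      · have hz : ‖x i - xs‖ = 0 := hri.symm
        rw [hz]
        have : (0:ℝ) ≤ P * ∑ j ∈ F i ∩ H, ‖x i - x j‖^2 := mul_nonneg hPpos.le hTA0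
        nlinarith
      · have h6 : (lam * (H.card:ℝ) - mu * ((H.erase i \ F i).card : ℝ)) * ‖x i - xs‖^2
            ≤ mu * ‖x i - xs‖ * ∑ j ∈ F i ∩ H, ‖x i - x j‖ := by linarith [hmain]
        have h6b := mul_le_mul_of_nonneg_right hDge (sq_nonneg ‖x i - xs‖)
        have h7 : (M * ‖x i - xs‖) * ‖x i - xs‖
            ≤ (mu * ∑ j ∈ F i ∩ H, ‖x i - x j‖) * ‖x i - xs‖ := by linarith [h6b, h6]
        have h5 : M * ‖x i - xs‖ ≤ mu * ∑ j ∈ F i ∩ H, ‖x i - x j‖ :=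
          le_of_mul_le_mul_right h7 hri
        have h8 : (M * ‖x i - xs‖)^2 ≤ (mu * ∑ j ∈ F i ∩ H, ‖x i - x j‖)^2 := by
          have h9 : 0 ≤ M * ‖x i - xs‖ := mul_nonneg hMpos.le (norm_nonneg _)
          exact pow_le_pow_left₀ h9 h5 2
        have h10 : (∑ j ∈ F i ∩ H, ‖x i - x j‖)^2
            ≤ ((F i ∩ H).card : ℝ) * ∑ j ∈ F i ∩ H, ‖x i - x j‖^2 := by
          exact sq_sum_le_card_mul_sum_sq
        have h11 : ((F i ∩ H).card : ℝ) ≤ N := by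
          have : (0:ℝ) ≤ ((F i \ H).card : ℝ) := Nat.cast_nonneg _
          linarith
        have h12 : ((F i ∩ H).card : ℝ) * ∑ j ∈ F i ∩ H, ‖x i - x j‖^2
            ≤ N * ∑ j ∈ F i ∩ H, ‖x i - x j‖^2 :=
          mul_le_mul_of_nonneg_right h11 hTA0
        rw [hPdef]
        have h13 := mul_le_mul_of_nonneg_left h10 (sq_nonneg mu)
        have h14 := mul_le_mul_of_nonneg_left h12 (sq_nonneg mu)
        linarith [h8, h13, h14]
    -- φ decomposition
    have hphisplit : ⟪x i - xs, ∑ j ∈ F i, (x i - m i j)⟫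
        = ∑ j ∈ F i ∩ H, ⟪x i - xs, x i - x j⟫
          + ∑ j ∈ F i \ H, ⟪x i - xs, x i - m i j⟫ := by
      rw [inner_sum, ← Finset.sum_inter_add_sum_sdiff (F i) H
        (fun j => ⟪x i - xs, x i - m i j⟫)]
      congr 1
      refine Finset.sum_congr rfl fun j hj => ?_
      rw [hm i hi j (hAsub hj)]
    have hhon : ∀ j ∈ F i ∩ H, ⟪x i - xs, x i - x j⟫
        = (‖x i - xs‖^2 + ‖x i - x j‖^2 - ‖x j - xs‖^2) / 2 := by
      intro j _
      have e1 : x i - x j = (x i - xs) - (x j - xs) := (sub_sub_sub_cancel_right _ _ _).symm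
      rw [e1, inner_sub_right, real_inner_self_eq_norm_sq]
      have e2 := norm_sub_sq_real (x i - xs) (x j - xs)
      linarith
    have hP2 : ∑ j ∈ F i ∩ H, ⟪x i - xs, x i - x j⟫
        = (((F i ∩ H).card : ℝ) * ‖x i - xs‖^2 + ∑ j ∈ F i ∩ H, ‖x i - x j‖^2
            - ∑ j ∈ F i ∩ H, ‖x j - xs‖^2) / 2 := by
      rw [Finset.sum_congr rfl hhon, ← Finset.sum_div, Finset.sum_sub_distrib,
        Finset.sum_add_distrib, Finset.sum_const, nsmul_eq_mul]
    -- Byzantine part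
    have hdm : ∀ j ∈ F i \ H, ∀ k ∈ K, ‖x i - m i j‖ ≤ ‖x i - x k‖ := by
      intro j hj k hk
      have hkO : k ∈ H.erase i \ F i := hKO hk
      rw [Finset.mem_sdiff] at hkO
      have hkV : k ∈ V.erase i \ F i := by
        rw [Finset.mem_sdiff]
        exact ⟨Finset.mem_erase.mpr ⟨(Finset.mem_erase.mp hkO.1).1,
          hHV (Finset.mem_of_mem_erase hkO.1)⟩, hkO.2⟩
      have h1 := hfilter i hi j (Finset.mem_sdiff.mp hj).1 k hkV
      rwa [hm i hi k hkO.1] at h1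
    have hsumdm : ∑ j ∈ F i \ H, ‖x i - m i j‖ ≤ ∑ k ∈ K, ‖x i - x k‖ := by
      rcases Nat.eq_zero_or_pos K.card with h0 | hpos
      · have hB0 : F i \ H = ∅ := Finset.card_eq_zero.mp (by omega)
        rw [hB0, Finset.sum_empty]
        exact Finset.sum_nonneg fun k _ => norm_nonneg _
      · have hK0 : (0:ℝ) < (K.card : ℝ) := by exact_mod_cast hpos
        have h1 : ∀ j ∈ F i \ H, (K.card:ℝ) * ‖x i - m i j‖ ≤ ∑ k ∈ K, ‖x i - x k‖ := by
          intro j hj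
          calc (K.card:ℝ) * ‖x i - m i j‖ = ∑ _k ∈ K, ‖x i - m i j‖ := by
                rw [Finset.sum_const, nsmul_eq_mul]
            _ ≤ ∑ k ∈ K, ‖x i - x k‖ := Finset.sum_le_sum (hdm j hj)
        have h2 : ∑ j ∈ F i \ H, (K.card:ℝ) * ‖x i - m i j‖
            ≤ ∑ _j ∈ F i \ H, ∑ k ∈ K, ‖x i - x k‖ := Finset.sum_le_sum h1
        rw [← Finset.mul_sum, Finset.sum_const, nsmul_eq_mul, hKcard] at h2
        have h3 : ((F i \ H).card : ℝ) * ∑ j ∈ F i \ H, ‖x i - m i j‖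
            ≤ ((F i \ H).card : ℝ) * ∑ k ∈ K, ‖x i - x k‖ := by
          rw [← hKcard] at h2 ⊢
          exact h2
        rw [← hKcard] at h3
        exact le_of_mul_le_mul_left h3 hK0
    have hbyz : -(‖x i - xs‖ * ∑ k ∈ K, ‖x i - x k‖)
        ≤ ∑ j ∈ F i \ H, ⟪x i - xs, x i - m i j⟫ := by
      have h1 : ∀ j ∈ F i \ H,
          -(‖x i - xs‖ * ‖x i - m i j‖) ≤ ⟪x i - xs, x i - m i j⟫ := by
        intro j hj
        have h2 := abs_real_inner_le_norm (x i - xs) (x i - m i j)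
        have h3 := neg_abs_le ⟪x i - xs, x i - m i j⟫
        linarith
      have h4 := Finset.sum_le_sum h1
      have h5 : ∑ j ∈ F i \ H, -(‖x i - xs‖ * ‖x i - m i j‖)
          = -(‖x i - xs‖ * ∑ j ∈ F i \ H, ‖x i - m i j‖) := by
        rw [Finset.sum_neg_distrib, ← Finset.mul_sum]
      rw [h5] at h4
      have h6 := mul_le_mul_of_nonneg_left hsumdm (norm_nonneg (x i - xs))
      linarith
    -- triangle bounds on K
    have hP3 : ‖x i - xs‖ * ∑ k ∈ K, ‖x i - x k‖
        ≤ ∑ k ∈ K, (‖x i - xs‖^2 + ‖x i - xs‖ * ‖x k - xs‖) := by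
      rw [Finset.mul_sum]
      refine Finset.sum_le_sum fun k _ => ?_
      have htri : ‖x i - x k‖ ≤ ‖x i - xs‖ + ‖x k - xs‖ := by
        have h1 := norm_sub_le (x i - xs) (x k - xs)
        rwa [sub_sub_sub_cancel_right] at h1
      have h2 := mul_le_mul_of_nonneg_left htri (norm_nonneg (x i - xs))
      nlinarith [h2]
    have hP4 : ∑ _k ∈ K, (-(3/2) * ‖x i - xs‖^2)
        ≤ ∑ k ∈ K, (‖x k - xs‖^2/2 - (‖x i - xs‖^2 + ‖x i - xs‖ * ‖x k - xs‖)) := by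
      refine Finset.sum_le_sum fun k _ => ?_
      nlinarith [sq_nonneg (‖x k - xs‖ - ‖x i - xs‖)]
    have hP4' : -(3/2) * (K.card : ℝ) * ‖x i - xs‖^2
        ≤ ∑ k ∈ K, ‖x k - xs‖^2/2
          - (∑ k ∈ K, (‖x i - xs‖^2 + ‖x i - xs‖ * ‖x k - xs‖)) := by
      rw [← Finset.sum_sub_distrib]
      calc -(3/2) * (K.card : ℝ) * ‖x i - xs‖^2
          = ∑ _k ∈ K, (-(3/2) * ‖x i - xs‖^2) := by
            rw [Finset.sum_const, nsmul_eq_mul]; ring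
        _ ≤ _ := hP4
    -- sums of squared radii
    have hRAeq : ∑ j ∈ F i ∩ H, ‖x j - xs‖^2 + ∑ j ∈ H.erase i \ F i, ‖x j - xs‖^2
        = Vs - ‖x i - xs‖^2 := by
      rw [← hAeq, Finset.sum_inter_add_sum_sdiff (H.erase i) (F i) (fun j => ‖x j - xs‖^2)]
      have h1 : ‖x i - xs‖^2 + ∑ j ∈ H.erase i, ‖x j - xs‖^2 = ∑ j ∈ H, ‖x j - xs‖^2 :=
        Finset.add_sum_erase H (fun j => ‖x j - xs‖^2) hi
      rw [hVdef]
      linarith [h1]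
    have hRK : ∑ k ∈ K, ‖x k - xs‖^2 ≤ ∑ j ∈ H.erase i \ F i, ‖x j - xs‖^2 :=
      Finset.sum_le_sum_of_subset_of_nonneg hKO fun j _ _ => sq_nonneg _
    -- key2 in divided form
    have hP6 : M^2/(2*P) * ‖x i - xs‖^2 ≤ (∑ j ∈ F i ∩ H, ‖x i - x j‖^2) / 2 := by
      rw [div_mul_eq_mul_div, div_le_div_iff₀ (by positivity) (by norm_num)]
      linarith [hkey2]
    -- coefficient inequality
    have hcoef : 0 ≤ (((F i ∩ H).card : ℝ) + 1)/2 - (3/2) * ((F i \ H).card : ℝ)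
        + 2*(f:ℝ) - (H.card:ℝ)/2 := by
      have h1 : (n:ℝ) - N = (f:ℝ) := by rw [hNdef]; ring
      linarith [hRab, hRb, hNh]
    have hcoef' : 0 ≤ ((((F i ∩ H).card : ℝ) + 1)/2 - (3/2) * ((F i \ H).card : ℝ)
        + 2*(f:ℝ) - (H.card:ℝ)/2) * ‖x i - xs‖^2 :=
      mul_nonneg hcoef (sq_nonneg _)
    have hKB : (K.card : ℝ) = ((F i \ H).card : ℝ) := by exact_mod_cast hKcard
    have hKhalf : ∑ k ∈ K, ‖x k - xs‖^2/2 = (∑ k ∈ K, ‖x k - xs‖^2)/2 :=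
      (Finset.sum_div _ _ _).symm
    have hKB' : ((K.card : ℝ)) * ‖x i - xs‖^2 = ((F i \ H).card : ℝ) * ‖x i - xs‖^2 := by
      rw [hKB]
    rw [hphisplit, hP2]
    linarith [hbyz, hP3, hP4', hRAeq, hRK, hP6, hcoef', hKB', hKhalf]
  have hLHS : ∑ i ∈ H, ((M^2/(2*P) - 2*(f:ℝ) + (H.card:ℝ)/2) * ‖x i - xs‖^2 - Vs/2)
      = (M^2/(2*P) - 2*(f:ℝ) + (H.card:ℝ)/2) * Vs - (H.card:ℝ) * (Vs/2) := by
    rw [Finset.sum_sub_distrib, ← Finset.mul_sum, Finset.sum_const, nsmul_eq_mul, ← hVdef]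
  rw [ge_iff_le]
  calc (M^2 / (2*mu^2*N) - 2*(f:ℝ)) * Vs
      = ∑ i ∈ H, ((M^2/(2*P) - 2*(f:ℝ) + (H.card:ℝ)/2) * ‖x i - xs‖^2 - Vs/2) := by
        rw [hLHS, hPdef]; ring
    _ ≤ ∑ i ∈ H, ⟪x i - xs, ∑ j ∈ F i, (x i - m i j)⟫ := Finset.sum_le_sum key
end

section
/- Let n > f ≥ 0 be integers, V a set of n agents, and H ⊆ V. Suppose for each i ∈ H we are given a point x_i ∈ ℝ^d, vectors m(i,j) ∈ ℝ^d for j ∈ V∖{i} with m(i,j) = x_j for j ∈ H∖{i}, and a set F_i ⊆ V∖{i} with |F_i| = n − f − 1 such that: ‖x_i − m(i,j)‖ ≤ ‖x_i − m(i,k)‖ for all j ∈ F_i and k ∈ (V∖{i})∖F_i, and |(V∖{i}) ∖ H| ≤ f. Then for every x* ∈ ℝ^d: Σ_{i∈H} ‖Σ_{j∈F_i} (x_i − m(i,j))‖² ≤ 4|H|³ · Σ_{i∈H} ‖x_i − x*‖². -/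
open Finset

/-- Part II of the proof of Theorem 1: the aggregate squared norm
of the filtered update directions is at most `4|H|³ · Σ_{i∈H} ‖x_i − x*‖²`. -/
theorem sum_psi_upper_bound {d n f : ℕ} {ι : Type*} [DecidableEq ι]
    (hnf : f < n) (V H : Finset ι) (hV : V.card = n) (hHV : H ⊆ V)
    (x : ι → EuclideanSpace ℝ (Fin d))
    (m : ι → ι → EuclideanSpace ℝ (Fin d))
    (hm : ∀ i ∈ H, ∀ j ∈ H.erase i, m i j = x j)
    (F : ι → Finset ι)
    (hFsub : ∀ i ∈ H, F i ⊆ V.erase i)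
    (hFcard : ∀ i ∈ H, (F i).card = n - f - 1)
    (hfilter : ∀ i ∈ H, ∀ j ∈ F i, ∀ k ∈ V.erase i \ F i,
      ‖x i - m i j‖ ≤ ‖x i - m i k‖)
    (hfaulty : ∀ i ∈ H, (V.erase i \ H).card ≤ f) :
    ∀ xs : EuclideanSpace ℝ (Fin d),
      ∑ i ∈ H, ‖∑ j ∈ F i, (x i - m i j)‖ ^ 2
        ≤ 4 * (H.card : ℝ) ^ 3 * ∑ i ∈ H, ‖x i - xs‖ ^ 2 := by
  intro xs
  set Vt := ∑ i ∈ H, ‖x i - xs‖ ^ 2 with hVtdef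
  have hVt0 : (0:ℝ) ≤ Vt := Finset.sum_nonneg fun i _ => sq_nonneg _
  set S := Real.sqrt Vt with hSdef
  have hS0 : (0:ℝ) ≤ S := Real.sqrt_nonneg _
  have hSsq : S ^ 2 = Vt := Real.sq_sqrt hVt0
  have hbound : ∀ k ∈ H, ‖x k - xs‖ ≤ S := by
    intro k hk
    have h1 : ‖x k - xs‖ ^ 2 ≤ Vt :=
      Finset.single_le_sum (f := fun i => ‖x i - xs‖ ^ 2) (fun i _ => sq_nonneg _) hk
    nlinarith [norm_nonneg (x k - xs)]
  -- triangle bound for honest pairs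
  have htri : ∀ i ∈ H, ∀ k ∈ H, ‖x i - x k‖ ≤ 2 * S := by
    intro i hi k hk
    have := dist_triangle (x i) xs (x k)
    rw [dist_eq_norm, dist_eq_norm, dist_eq_norm] at this
    have h2 : ‖xs - x k‖ = ‖x k - xs‖ := norm_sub_rev _ _
    have := hbound i hi
    have := hbound k hk
    linarith
  -- key per-element bound
  have key : ∀ i ∈ H, ∀ j ∈ F i, ‖x i - m i j‖ ≤ 2 * S := by
    intro i hi j hj
    have hjV : j ∈ V.erase i := hFsub i hi hj
    have hjne : j ≠ i := Finset.ne_of_mem_erase hjV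
    by_cases hjH : j ∈ H
    · rw [hm i hi j (Finset.mem_erase.mpr ⟨hjne, hjH⟩)]
      exact htri i hi j hjH
    · -- j faulty: find an honest k outside F i
      have hVi : (V.erase i).card = n - 1 := by
        rw [Finset.card_erase_of_mem (hHV hi), hV]
      have hC : (V.erase i \ F i).card = f := by
        rw [Finset.card_sdiff_of_subset (hFsub i hi), hVi, hFcard i hi]; omega
      have hjnC : j ∉ (V.erase i \ F i) \ H := by
        simp [Finset.mem_sdiff, hj]
      have hins : insert j ((V.erase i \ F i) \ H) ⊆ V.erase i \ H := by
        intro a ha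
        rcases Finset.mem_insert.mp ha with rfl | ha
        · exact Finset.mem_sdiff.mpr ⟨hjV, hjH⟩
        · rcases Finset.mem_sdiff.mp ha with ⟨ha1, ha2⟩
          exact Finset.mem_sdiff.mpr ⟨(Finset.mem_sdiff.mp ha1).1, ha2⟩
      have hcard : ((V.erase i \ F i) \ H).card + 1 ≤ f := by
        have := Finset.card_le_card hins
        rw [Finset.card_insert_of_notMem hjnC] at this
        exact le_trans this (hfaulty i hi)
      have hex : ∃ k ∈ V.erase i \ F i, k ∈ H := by
        by_contra hcon
        push_neg at hcon
        have hsub : V.erase i \ F i ⊆ (V.erase i \ F i) \ H := by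
          intro a ha
          exact Finset.mem_sdiff.mpr ⟨ha, hcon a ha⟩
        have := Finset.card_le_card hsub
        omega
      obtain ⟨k, hkC, hkH⟩ := hex
      have hkne : k ≠ i := Finset.ne_of_mem_erase (Finset.mem_sdiff.mp hkC).1
      have h1 : ‖x i - m i j‖ ≤ ‖x i - m i k‖ := hfilter i hi j hj k hkC
      rw [hm i hi k (Finset.mem_erase.mpr ⟨hkne, hkH⟩)] at h1
      exact le_trans h1 (htri i hi k hkH)
  -- |F i| ≤ |H|
  have hFle : ∀ i ∈ H, (F i).card ≤ H.card := by
    intro i hi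
    have hVi : (V.erase i).card = n - 1 := by
      rw [Finset.card_erase_of_mem (hHV hi), hV]
    have hsub : V.erase i ⊆ (V.erase i \ H) ∪ H.erase i := by
      intro a ha
      by_cases haH : a ∈ H
      · exact Finset.mem_union.mpr (Or.inr (Finset.mem_erase.mpr
          ⟨Finset.ne_of_mem_erase ha, haH⟩))
      · exact Finset.mem_union.mpr (Or.inl (Finset.mem_sdiff.mpr ⟨ha, haH⟩))
    have h1 := le_trans (Finset.card_le_card hsub) (Finset.card_union_le _ _)
    have h2 := hfaulty i hi
    have h3 : (H.erase i).card ≤ H.card := Finset.card_erase_le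
    rw [hVi] at h1
    rw [hFcard i hi]
    omega
  -- assemble
  calc ∑ i ∈ H, ‖∑ j ∈ F i, (x i - m i j)‖ ^ 2
      ≤ ∑ i ∈ H, (2 * (H.card : ℝ) * S) ^ 2 := by
        apply Finset.sum_le_sum
        intro i hi
        have h1 : ‖∑ j ∈ F i, (x i - m i j)‖ ≤ 2 * (H.card : ℝ) * S := by
          calc ‖∑ j ∈ F i, (x i - m i j)‖
              ≤ ∑ j ∈ F i, ‖x i - m i j‖ := norm_sum_le _ _
            _ ≤ (F i).card • (2 * S) :=
                Finset.sum_le_card_nsmul _ _ _ (fun j hj => key i hi j hj)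
            _ = ((F i).card : ℝ) * (2 * S) := nsmul_eq_mul _ _
            _ ≤ (H.card : ℝ) * (2 * S) := by
                have := hFle i hi
                have : ((F i).card : ℝ) ≤ (H.card : ℝ) := by exact_mod_cast this
                nlinarith
            _ = 2 * (H.card : ℝ) * S := by ring
        have h2 : (0:ℝ) ≤ ‖∑ j ∈ F i, (x i - m i j)‖ := norm_nonneg _
        nlinarith
    _ = (H.card : ℝ) * (2 * (H.card : ℝ) * S) ^ 2 := by
        rw [Finset.sum_const, nsmul_eq_mul]
    _ = 4 * (H.card : ℝ) ^ 3 * Vt := by rw [← hSsq]; ring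
end

section
/- Let n > f ≥ 0 be integers, let A be a finite set with |A| = n − 1, let H' ⊆ A with |A ∖ H'| ≤ f, let x ∈ ℝ^d, let m : A → ℝ^d, and let F ⊆ A with |F| = n − f − 1 be such that ‖x − m(j)‖ ≤ ‖x − m(k)‖ for all j ∈ F and k ∈ A ∖ F. Then ‖Σ_{j∈F} (x − m(j))‖ ≤ Σ_{j∈H'} ‖x − m(j)‖. -/
open Finset

/-- inequality (47): the norm of the filtered update direction is
dominated by the sum of distances to the non-faulty estimates. -/
theorem filtered_sum_norm_le {d n f : ℕ} {ι : Type*} [DecidableEq ι]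
    (hnf : f < n)
    (A H' F : Finset ι) (hA : A.card = n - 1)
    (hH'A : H' ⊆ A) (hfaulty : (A \ H').card ≤ f)
    (x : EuclideanSpace ℝ (Fin d)) (m : ι → EuclideanSpace ℝ (Fin d))
    (hFA : F ⊆ A) (hFcard : F.card = n - f - 1)
    (hfilter : ∀ j ∈ F, ∀ k ∈ A \ F, ‖x - m j‖ ≤ ‖x - m k‖) :
    ‖∑ j ∈ F, (x - m j)‖ ≤ ∑ j ∈ H', ‖x - m j‖ := by
  -- card facts
  have hHcard : (n - 1) - f ≤ H'.card := by
    have := Finset.card_sdiff_add_card_inter A H'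
    have h1 : (A ∩ H').card = H'.card := by
      rw [Finset.inter_comm, Finset.inter_eq_left.mpr hH'A]
    omega
  have hFH : F.card ≤ H'.card := by omega
  have hT : (F \ H').card ≤ (H' \ F).card := by
    have h1 := Finset.card_sdiff_add_card_inter F H'
    have h2 := Finset.card_sdiff_add_card_inter H' F
    rw [Finset.inter_comm] at h2
    omega
  obtain ⟨S, hSsub, hScard⟩ := Finset.exists_subset_card_eq hT
  have hSAF : S ⊆ A \ F := fun k hk => by
    have := hSsub hk
    simp only [Finset.mem_sdiff] at this ⊢
    exact ⟨hH'A this.1, this.2⟩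
  -- sum over F\H' bounded by sum over S
  have key : ∑ j ∈ F \ H', ‖x - m j‖ ≤ ∑ j ∈ S, ‖x - m j‖ := by
    rcases Finset.eq_empty_or_nonempty (F \ H') with h | h
    · rw [h]
      simp only [Finset.sum_empty]
      exact Finset.sum_nonneg fun i _ => norm_nonneg _
    · have hSne : S.Nonempty := Finset.card_pos.mp (by rw [hScard]; exact Finset.card_pos.mpr h)
      obtain ⟨k₀, hk₀S, hk₀min⟩ := Finset.exists_min_image S (fun k => ‖x - m k‖) hSne
      calc ∑ j ∈ F \ H', ‖x - m j‖
          ≤ ∑ _j ∈ F \ H', ‖x - m k₀‖ := by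
            refine Finset.sum_le_sum fun j hj => ?_
            exact hfilter j (Finset.mem_sdiff.mp hj).1 k₀ (hSAF hk₀S)
        _ = (F \ H').card • ‖x - m k₀‖ := by rw [Finset.sum_const]
        _ = S.card • ‖x - m k₀‖ := by rw [hScard]
        _ ≤ ∑ j ∈ S, ‖x - m j‖ := Finset.card_nsmul_le_sum S _ _ fun k hk => hk₀min k hk
  have hdisj : Disjoint (F ∩ H') S := by
    refine Finset.disjoint_left.mpr fun a ha haS => ?_
    exact (Finset.mem_sdiff.mp (hSsub haS)).2 (Finset.mem_inter.mp ha).1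
  calc ‖∑ j ∈ F, (x - m j)‖
      ≤ ∑ j ∈ F, ‖x - m j‖ := norm_sum_le _ _
    _ = ∑ j ∈ F ∩ H', ‖x - m j‖ + ∑ j ∈ F \ H', ‖x - m j‖ :=
        (Finset.sum_inter_add_sum_sdiff F H' _).symm
    _ ≤ ∑ j ∈ F ∩ H', ‖x - m j‖ + ∑ j ∈ S, ‖x - m j‖ := by linarith
    _ = ∑ j ∈ (F ∩ H') ∪ S, ‖x - m j‖ := (Finset.sum_union hdisj).symm
    _ ≤ ∑ j ∈ H', ‖x - m j‖ := by
        refine Finset.sum_le_sum_of_subset_of_nonneg ?_ fun i _ _ => norm_nonneg _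
        refine Finset.union_subset (Finset.inter_subset_right) fun k hk => (Finset.mem_sdiff.mp (hSsub hk)).1
end

section
/- Let μ, λ be positive reals and n > f ≥ 0 integers with n − f > 0. Define α = (1 − √(1 + λ/μ))² − f/(n−f) and β = (λ(n−f) − μf)² / (2μ²(n−f)) − 2f. Then β = α · (α/2 + 2√(1 + λ/μ)) · (n − f). In particular, if α > 0 then β > 0. -/
/-- equation (58): the identity
`β = α (α/2 + 2√(1 + λ/μ)) (n − f)` between the contraction coefficient `β`
and the fault-tolerance margin `α`; in particular `α > 0` implies `β > 0`. -/
theorem beta_eq_alpha_formula (mu lam : ℝ) (hmu : 0 < mu) (hlam : 0 < lam)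
    (n f : ℕ) (hnf : f < n) :
    ((lam * ((n : ℝ) - (f : ℝ)) - mu * (f : ℝ)) ^ 2
        / (2 * mu ^ 2 * ((n : ℝ) - (f : ℝ))) - 2 * (f : ℝ))
      = ((1 - Real.sqrt (1 + lam / mu)) ^ 2 - (f : ℝ) / ((n : ℝ) - (f : ℝ)))
        * (((1 - Real.sqrt (1 + lam / mu)) ^ 2 - (f : ℝ) / ((n : ℝ) - (f : ℝ))) / 2
            + 2 * Real.sqrt (1 + lam / mu))
        * ((n : ℝ) - (f : ℝ))
    ∧ ((1 - Real.sqrt (1 + lam / mu)) ^ 2 - (f : ℝ) / ((n : ℝ) - (f : ℝ)) > 0 →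
        (lam * ((n : ℝ) - (f : ℝ)) - mu * (f : ℝ)) ^ 2
          / (2 * mu ^ 2 * ((n : ℝ) - (f : ℝ))) - 2 * (f : ℝ) > 0) := by
  have hm : (0:ℝ) < (n : ℝ) - (f : ℝ) := by
    have : (f:ℝ) < (n:ℝ) := by exact_mod_cast hnf
    linarith
  set s := Real.sqrt (1 + lam / mu) with hs
  have hs0 : 0 ≤ s := Real.sqrt_nonneg _
  have harg : (0:ℝ) ≤ 1 + lam / mu := by positivity
  have hs2 : s ^ 2 = 1 + lam / mu := Real.sq_sqrt harg
  have hlam' : lam = mu * (s ^ 2 - 1) := by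
    rw [hs2]; field_simp; ring
  have key :
      ((lam * ((n : ℝ) - (f : ℝ)) - mu * (f : ℝ)) ^ 2
        / (2 * mu ^ 2 * ((n : ℝ) - (f : ℝ))) - 2 * (f : ℝ))
      = ((1 - s) ^ 2 - (f : ℝ) / ((n : ℝ) - (f : ℝ)))
        * (((1 - s) ^ 2 - (f : ℝ) / ((n : ℝ) - (f : ℝ))) / 2 + 2 * s)
        * ((n : ℝ) - (f : ℝ)) := by
    rw [hlam']
    field_simp
    ring
  refine ⟨key, fun hα => ?_⟩
  rw [key]
  have h1 : (0:ℝ) < ((1 - s) ^ 2 - (f : ℝ) / ((n : ℝ) - (f : ℝ))) / 2 + 2 * s := by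
    positivity
  positivity
end
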